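/- Suppose in a multi-agent modular model M at world w there exists an explanation E with claim(E) = F that agent 2 understands and agent 1 is aware of, and suppose the total number of explanations for F available to agent 1 is finite. Then there exists a finite conversation history η = (1:?F)(2:E_1)(1:F(E_1))···(2:E_n)(1:F(E_n)), where each E_k is a most preferred explanation with respect to the prefix pre(η,k−1), such that after the sequence of updates agent 2 has a ground derived term t justifying F (M,w ⊨ [2:E_n]···[1:F(E_1)][2:E_1][[t]]_2 F) and all nodes of the final feedback F(E_n) have value 1. -/

import Mathlib

open Classical

/-- Propositional formulas. -/
inductive PropForm : Type
  | atom : ℕ → PropForm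
  | fls : PropForm
  | imp : PropForm → PropForm → PropForm
  deriving DecidableEq

/-- Justification terms: constants, variables (indexed by a formula and a list
of formulas), and application. -/
inductive Tm : Type
  | const : ℕ → Tm
  | var : PropForm → List PropForm → Tm
  | app : Tm → Tm → Tm
  deriving DecidableEq

/-- Ground terms: terms without variables. -/
def Tm.Ground : Tm → Prop
  | .const _ => True
  | .var _ _ => False
  | .app s t => s.Ground ∧ t.Ground

/-- Subterm relation. -/
def Tm.Subterm (s : Tm) : Tm → Prop
  | .app a b => s = Tm.app a b ∨ s.Subterm a ∨ s.Subterm b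
  | t => s = t

/-- Substitution of a term for a justification variable. -/
def Tm.subst (x : PropForm × List PropForm) (r : Tm) : Tm → Tm
  | .const n => .const n
  | .var F L => if (F, L) = x then r else .var F L
  | .app a b => .app (Tm.subst x r a) (Tm.subst x r b)

/-- `bigImp [A1,…,An] B = A1 → (… → (An → B)…)`. -/
def bigImp (L : List PropForm) (B : PropForm) : PropForm := L.foldr PropForm.imp B

/-- Formulas of the full language 𝓛J. -/
inductive JForm : Type
  | atom : ℕ → JForm
  | fls : JForm
  | imp : JForm → JForm → JForm
  | box : Fin 2 → JForm → JForm
  | just : Fin 2 → Tm → PropForm → JForm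

/-- Embedding of propositional formulas into 𝓛J. -/
def PropForm.toJ : PropForm → JForm
  | .atom n => .atom n
  | .fls => .fls
  | .imp A B => .imp A.toJ B.toJ

/-- A multi-agent frame: agents 0 (explainer, "agent 1") and 1 (explainee,
"agent 2"), worlds, reflexive transitive accessibility relations, evidence
functions, and a valuation. -/
structure Frame where
  W : Type
  ne : Nonempty W
  R : Fin 2 → W → W → Prop
  refl : ∀ i, Reflexive (R i)
  trans : ∀ i, Transitive (R i)
  star : Fin 2 → Tm → W → Set PropForm
  val : ℕ → Set W

/-- Truth of propositional formulas. -/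
def Frame.psat (M : Frame) : M.W → PropForm → Prop := fun w F =>
  match F with
  | .atom n => w ∈ M.val n
  | .fls => False
  | .imp A B => M.psat w A → M.psat w B

/-- Truth for the full language. -/
def Frame.sat (M : Frame) : M.W → JForm → Prop := fun w φ =>
  match φ with
  | .atom n => w ∈ M.val n
  | .fls => False
  | .imp A B => M.sat w A → M.sat w B
  | .box i A => ∀ u, M.R i w u → M.sat u A
  | .just i t F => F ∈ M.star i t w

/-- Justification yields belief (for ground terms). -/
def Frame.JYB (M : Frame) : Prop :=
  ∀ i (t : Tm) w F, t.Ground → F ∈ M.star i t w → ∀ u, M.R i w u → M.psat u F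

/-- Finiteness constraints on evidence functions. -/
def Frame.FinEv (M : Frame) : Prop :=
  (∀ i w, {t : Tm | t.Ground ∧ (M.star i t w).Nonempty}.Finite) ∧
  (∀ i (t : Tm) w, t.Ground → (M.star i t w).Finite)

/-- Multi-agent modular models. -/
def Frame.Modular (M : Frame) : Prop := M.JYB ∧ M.FinEv

/-- Explanations: finite trees of propositional formulas. `node cs B` has
claim `B`; it is a hypothesis (leaf) if `cs = []` and a derived formula
otherwise. -/
inductive Expl : Type
  | node : List Expl → PropForm → Expl

def Expl.claim : Expl → PropForm
  | .node _ B => B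

def Expl.children : Expl → List Expl
  | .node cs _ => cs

/-- Hypotheses (leaves) of an explanation. -/
def Expl.hyps : Expl → List PropForm
  | .node [] B => [B]
  | .node (c :: cs) _ => ((c :: cs).attach).flatMap (fun x => x.1.hyps)
decreasing_by
  have := List.sizeOf_lt_of_mem x.2
  simp only [Expl.node.sizeOf_spec] at *
  omega

/-- Deduction steps of an explanation: pairs (premises, derived formula). -/
def Expl.steps : Expl → List (List PropForm × PropForm)
  | .node [] _ => []
  | .node (c :: cs) B =>
      ((c :: cs).map Expl.claim, B) :: ((c :: cs).attach).flatMap (fun x => x.1.steps)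
decreasing_by
  have := List.sizeOf_lt_of_mem x.2
  simp only [Expl.node.sizeOf_spec] at *
  omega

/-- All subtrees of an explanation (including itself). -/
def Expl.subtrees : Expl → List Expl
  | .node cs B => .node cs B :: (cs.attach).flatMap (fun x => x.1.subtrees)
decreasing_by
  have := List.sizeOf_lt_of_mem x.2
  simp only [Expl.node.sizeOf_spec] at *
  omega

/-- Set of derived formulas of an explanation. -/
def Expl.dset (E : Expl) : Set PropForm := {G | ∃ L, (L, G) ∈ E.steps}

/-- `DTerm M i w E t`: `t` is a derived term of `claim E` with respect to the
explanation `E`, constructed by agent `i` at world `w`.  For a hypothesis the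
"derived term" is a ground justifying term if one exists, and the variable
`x_A` otherwise; for a derived formula it is `d·t₁⋯tₙ` if the agent has a
ground justification `d` of the deduction step, and the variable
`x_B^{Pr(E,B)}` otherwise. -/
inductive DTerm (M : Frame) (i : Fin 2) (w : M.W) : Expl → Tm → Prop
  | hyp_just {A : PropForm} {t : Tm} :
      t.Ground → A ∈ M.star i t w → DTerm M i w (.node [] A) t
  | hyp_var {A : PropForm} :
      (¬ ∃ t : Tm, t.Ground ∧ A ∈ M.star i t w) →
      DTerm M i w (.node [] A) (.var A [])
  | step {cs : List Expl} {B : PropForm} {d : Tm} {ts : List Tm}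
      (hne : cs ≠ []) (hd : d.Ground)
      (hj : bigImp (cs.map Expl.claim) B ∈ M.star i d w)
      (hlen : ts.length = cs.length)
      (hts : List.Forall₂ (DTerm M i w) cs ts) :
      DTerm M i w (.node cs B) (ts.foldl Tm.app d)
  | step_var {cs : List Expl} {B : PropForm} (hne : cs ≠ [])
      (h : ¬ ∃ d : Tm, d.Ground ∧ bigImp (cs.map Expl.claim) B ∈ M.star i d w) :
      DTerm M i w (.node cs B) (.var B (cs.map Expl.claim))

/-- Agent 2 understands `E` at `w` iff its derived term of `claim E` w.r.t.
`E` is ground. -/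
def Understands (M : Frame) (w : M.W) (E : Expl) : Prop :=
  ∃ t : Tm, DTerm M 1 w E t ∧ t.Ground

/-- The updated evidence function of agent 2 after learning from explanation
`E` at `w0`, where `Dts` records the derived term of each derived formula of
`E` and `r` is the derived term of `claim E`. -/
noncomputable def learnStar (M : Frame) (w0 : M.W) (E : Expl)
    (Dts : List (PropForm × Tm)) (r : Tm) : Fin 2 → Tm → M.W → Set PropForm :=
  fun i t w =>
    if i = 1 ∧ w = w0 then
      M.star i t w ∪ {F | (F, t) ∈ Dts} ∪
        {G | ∃ s : Tm, G ∈ M.star i s w ∧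
          (t = Tm.subst (E.claim, []) r s ∨ t = Tm.subst (E.claim, E.hyps) r s)}
    else M.star i t w

/-- The model `M|(2, w0, E)` after agent 2 learns from explanation `E`. -/
noncomputable def learnModel (M : Frame) (w0 : M.W) (E : Expl)
    (Dts : List (PropForm × Tm)) (r : Tm) : Frame :=
  { M with star := learnStar M w0 E Dts r }

/-- `Dts` and `r` are genuine derived-term data for `E`: every entry of `Dts`
is a derived term of a derived formula of `E`, every derived formula of `E`
has its derived term recorded in `Dts`, `r` is a derived term of `claim E`
w.r.t. `E`, and (when `E` is not a single hypothesis) `r` is the recorded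
derived term of `claim E`. -/
def GoodDerived (M : Frame) (w : M.W) (E : Expl)
    (Dts : List (PropForm × Tm)) (r : Tm) : Prop :=
  DTerm M 1 w E r ∧
  (∀ p ∈ Dts, ∃ sub ∈ E.subtrees, sub.children ≠ [] ∧ sub.claim = p.1 ∧
      DTerm M 1 w sub p.2) ∧
  (∀ sub ∈ E.subtrees, sub.children ≠ [] →
      ∃ t : Tm, (sub.claim, t) ∈ Dts ∧ DTerm M 1 w sub t) ∧
  (E.children ≠ [] → (E.claim, r) ∈ Dts)

/-- Restriction of a model to a set of worlds (update by a set of worlds). -/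
def Frame.restrict (M : Frame) (X : Set M.W) (hne : X.Nonempty) : Frame where
  W := X
  ne := hne.to_subtype
  R i u v := M.R i u.1 v.1
  refl i u := M.refl i u.1
  trans i _ _ _ h1 h2 := M.trans i h1 h2
  star i t u := M.star i t u.1
  val n := {u | u.1 ∈ M.val n}

/-- The feedback value of agent 2 on a node of an explanation: a hypothesis
gets value 1 iff agent 2 can justify it by a ground term; a derived formula
gets value 1 iff agent 2 understands the subexplanation rooted at it. -/
def FVal (M : Frame) (w : M.W) : Expl → Prop
  | .node [] A => ∃ t : Tm, t.Ground ∧ A ∈ M.star 1 t w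
  | .node (c :: cs) B => Understands M w (.node (c :: cs) B)

/-- The truth set by which agent 1 updates upon receiving agent 2's feedback
on the node `sub` of an explanation. -/
noncomputable def Uset (M : Frame) (w : M.W) : Expl → Set M.W
  | .node [] A =>
      if FVal M w (.node [] A) then {u | ∃ t : Tm, t.Ground ∧ A ∈ M.star 1 t u}
      else {u | ¬ ∃ t : Tm, t.Ground ∧ A ∈ M.star 1 t u}
  | .node (c :: cs) B =>
      if FVal M w (.node (c :: cs) B) then
        {u | ∃ t : Tm, t.Ground ∧ bigImp ((c :: cs).map Expl.claim) B ∈ M.star 1 t u}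
      else if ∀ c' ∈ c :: cs, FVal M w c' then
        {u | ¬ ∃ t : Tm, t.Ground ∧ bigImp ((c :: cs).map Expl.claim) B ∈ M.star 1 t u}
      else Set.univ

/-- The combined truth set of the series of updates by agent 2's feedback on
all nodes of explanation `E`. -/
noncomputable def FeedbackSet (M : Frame) (w : M.W) (E : Expl) : Set M.W :=
  {u | ∀ sub ∈ E.subtrees, u ∈ Uset M w sub}

/-- Agent 1 is not sure whether agent 2 can justify `F`:  ¬□₁△₂F. -/
def NotSure (M : Frame) (w : M.W) (F : PropForm) : Prop :=
  ¬ ∀ u, M.R 0 w u → ∃ t : Tm, t.Ground ∧ F ∈ M.star 1 t u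

/-- `N(E)`: the hypotheses and deduction steps of `E` that agent 1 is not
sure agent 2 can justify. -/
def Nset (M : Frame) (w : M.W) (E : Expl) : Set PropForm :=
  {F | (F ∈ E.hyps ∧ NotSure M w F) ∨
       ∃ p ∈ E.steps, p.2 = F ∧ NotSure M w (bigImp p.1 p.2)}

/-- The preference relation over explanations: `Pref M w E E'` means
`E ≾ E'` (`E'` is at least as preferred as `E`). -/
def Pref (M : Frame) (w : M.W) (E E' : Expl) : Prop :=
  (Nset M w E).ncard > (Nset M w E').ncard ∨
  ((Nset M w E).ncard = (Nset M w E').ncard ∧ E.dset.ncard ≥ E'.dset.ncard)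

/-- `E` is available for agent 1 (index 0) to agent 2 (index 1) at `w`. -/
def Available (M : Frame) (w : M.W) (E : Expl) : Prop :=
  (∀ A ∈ E.hyps, ∃ t : Tm, t.Ground ∧ A ∈ M.star 0 t w) ∧
  (∀ sub ∈ E.subtrees, sub.children ≠ [] →
      ∃ s : Tm, s.Ground ∧ DTerm M 0 w sub s ∧ sub.claim ∈ M.star 0 s w) ∧
  (∀ A ∈ E.hyps, ¬ ∀ u, M.R 0 w u → ¬ ∃ t : Tm, t.Ground ∧ A ∈ M.star 1 t u) ∧
  (∀ p ∈ E.steps,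
      ¬ ∀ u, M.R 0 w u → ¬ ∃ t : Tm, t.Ground ∧ bigImp p.1 p.2 ∈ M.star 1 t u)

/-- `λ(A, F)`: available explanations proving `F` from hypotheses `A`. -/
def lam (M : Frame) (w : M.W) (A : List PropForm) (F : PropForm) : Set Expl :=
  {E | E.claim = F ∧ (A ≠ [] → ∀ x, x ∈ E.hyps ↔ x ∈ A) ∧ Available M w E}

/-- `why(𝓕(E))`: the nodes of `E` with feedback value 0 all of whose
premises have feedback value 1. -/
def whySet (M : Frame) (w : M.W) (E : Expl) : Set Expl :=
  {sub | sub ∈ E.subtrees ∧ ¬ FVal M w sub ∧ ∀ c ∈ sub.children, FVal M w c}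

/-- The candidate explanations after feedback on `prev`: available
explanations for the initial claim `F` together with available explanations
for the formulas agent 2 asked about. -/
def Cands (M : Frame) (w : M.W) (F : PropForm) (prev : Expl) : Set Expl :=
  lam M w [] F ∪
    {E' | ∃ sub ∈ whySet M w prev,
        E' ∈ lam M w (sub.children.map Expl.claim) sub.claim}

/-- Most preferred explanations in a set of candidates. -/
def MostPref (M : Frame) (w : M.W) (X : Set Expl) (E : Expl) : Prop :=
  E ∈ X ∧ ∀ E' ∈ X, Pref M w E' E

/-- A state of the conversation: a model together with the actual world. -/
abbrev ConvState := Σ N : Frame, N.W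

/-- Agent 2 learns from explanation `E` (an update of the model). -/
def ExplStep (p q : ConvState) (E : Expl) : Prop :=
  ∃ (Dts : List (PropForm × Tm)) (r : Tm),
    GoodDerived p.1 p.2 E Dts r ∧ q = ⟨learnModel p.1 p.2 E Dts r, p.2⟩

/-- Agent 1 learns from agent 2's (truthful) feedback on `E`. -/
def FbStep (p q : ConvState) (E : Expl) : Prop :=
  ∃ hw : p.2 ∈ FeedbackSet p.1 p.2 E,
    q = ⟨p.1.restrict (FeedbackSet p.1 p.2 E) ⟨p.2, hw⟩, ⟨p.2, hw⟩⟩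

/-- One round of the conversation: an explanation followed by feedback. -/
def RoundStep (p q : ConvState) (E : Expl) : Prop :=
  ∃ mid : ConvState, ExplStep p mid E ∧ FbStep mid q E


namespace ConvAux

/-- Strong induction principle for explanations. -/
lemma expl_ind {P : Expl → Prop}
    (h : ∀ cs B, (∀ c ∈ cs, P c) → P (.node cs B)) : ∀ E, P E := by
  have key : ∀ n (E : Expl), sizeOf E ≤ n → P E := by
    intro n
    induction n with
    | zero =>
      intro E hE
      cases E with
      | node cs B => simp only [Expl.node.sizeOf_spec] at hE; omega
    | succ n ih =>
      intro E hE
      cases E with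
      | node cs B =>
        refine h cs B fun c hc => ih c ?_
        have := List.sizeOf_lt_of_mem hc
        simp only [Expl.node.sizeOf_spec] at hE
        omega
  exact fun E => key (sizeOf E) E le_rfl

lemma mem_subtrees {s : Expl} {cs : List Expl} {B : PropForm} :
    s ∈ (Expl.node cs B).subtrees ↔ s = .node cs B ∨ ∃ c ∈ cs, s ∈ c.subtrees := by
  rw [Expl.subtrees]
  simp

lemma self_mem_subtrees (E : Expl) : E ∈ E.subtrees := by
  cases E with
  | node cs B => exact mem_subtrees.mpr (Or.inl rfl)

lemma subtrees_trans : ∀ (E t s : Expl), t ∈ E.subtrees → s ∈ t.subtrees → s ∈ E.subtrees := by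
  refine expl_ind fun cs B ih t s ht hs => ?_
  rcases mem_subtrees.mp ht with rfl | ⟨c, hc, ht'⟩
  · exact hs
  · exact mem_subtrees.mpr (Or.inr ⟨c, hc, ih c hc t s ht' hs⟩)

lemma mem_hyps_cons {A : PropForm} {c : Expl} {cs : List Expl} {B : PropForm} :
    A ∈ (Expl.node (c :: cs) B).hyps ↔ ∃ c' ∈ c :: cs, A ∈ c'.hyps := by
  rw [Expl.hyps]
  simp
  aesop

lemma leaf_subtree_hyps : ∀ (E : Expl) (A : PropForm),
    (Expl.node [] A) ∈ E.subtrees → A ∈ E.hyps := by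
  refine expl_ind fun cs B ih A h => ?_
  rcases mem_subtrees.mp h with h | ⟨c, hc, h'⟩
  · cases h
    rw [Expl.hyps]; exact List.mem_singleton.mpr rfl
  · cases cs with
    | nil => cases hc
    | cons c0 cs' => exact mem_hyps_cons.mpr ⟨c, hc, ih c hc A h'⟩

lemma hyps_leaf_subtree : ∀ (E : Expl) (A : PropForm),
    A ∈ E.hyps → (Expl.node [] A) ∈ E.subtrees := by
  refine expl_ind fun cs B ih A h => ?_
  cases cs with
  | nil =>
    rw [Expl.hyps] at h
    rcases List.mem_singleton.mp h with rfl
    exact self_mem_subtrees _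
  | cons c0 cs' =>
    rcases mem_hyps_cons.mp h with ⟨c, hc, h'⟩
    exact mem_subtrees.mpr (Or.inr ⟨c, hc, ih c hc A h'⟩)

lemma mem_steps_cons {p : List PropForm × PropForm} {c : Expl} {cs : List Expl} {B : PropForm} :
    p ∈ (Expl.node (c :: cs) B).steps ↔
      p = ((c :: cs).map Expl.claim, B) ∨ ∃ c' ∈ c :: cs, p ∈ c'.steps := by
  rw [Expl.steps]
  simp
  aesop

lemma step_of_subtree : ∀ (E : Expl) (cs : List Expl) (B : PropForm), cs ≠ [] →
    Expl.node cs B ∈ E.subtrees → (cs.map Expl.claim, B) ∈ E.steps := by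
  refine expl_ind fun ds C ih cs B hne h => ?_
  rcases mem_subtrees.mp h with h | ⟨c, hc, h'⟩
  · injection h with h1 h2
    subst h1; subst h2
    cases cs with
    | nil => exact absurd rfl hne
    | cons c0 cs' => exact mem_steps_cons.mpr (Or.inl rfl)
  · have := ih c hc cs B hne h'
    cases ds with
    | nil => cases hc
    | cons d0 ds' => exact mem_steps_cons.mpr (Or.inr ⟨c, hc, this⟩)

lemma ground_foldl {ts : List Tm} {d : Tm} :
    (ts.foldl Tm.app d).Ground ↔ d.Ground ∧ ∀ t ∈ ts, t.Ground := by
  induction ts generalizing d with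
  | nil => simp
  | cons a l ih =>
    rw [List.foldl_cons, ih]
    show (Tm.Ground d ∧ Tm.Ground a) ∧ _ ↔ _
    simp only [List.mem_cons]
    constructor
    · rintro ⟨⟨h1, h2⟩, h3⟩
      exact ⟨h1, fun t ht => by rcases ht with rfl | ht; exact h2; exact h3 t ht⟩
    · rintro ⟨h1, h2⟩
      exact ⟨⟨h1, h2 a (Or.inl rfl)⟩, fun t ht => h2 t (Or.inr ht)⟩

lemma forall₂_of_forall_exists {α β : Type*} {R : α → β → Prop} {Q : β → Prop} :
    ∀ {l : List α}, (∀ a ∈ l, ∃ b, R a b ∧ Q b) →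
      ∃ l', List.Forall₂ R l l' ∧ ∀ b ∈ l', Q b := by
  intro l
  induction l with
  | nil => exact fun _ => ⟨[], List.Forall₂.nil, by simp⟩
  | cons a l ih =>
    intro h
    obtain ⟨b, hb, hQ⟩ := h a List.mem_cons_self
    obtain ⟨l', hl', hQ'⟩ := ih fun a' ha' => h a' (List.mem_cons_of_mem _ ha')
    exact ⟨b :: l', List.Forall₂.cons hb hl',
      fun b' hb' => by rcases List.mem_cons.mp hb' with rfl | hb'; exact hQ; exact hQ' _ hb'⟩

lemma forall₂_mem_left {α β : Type*} {R : α → β → Prop} :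
    ∀ {l₁ : List α} {l₂ : List β}, List.Forall₂ R l₁ l₂ → ∀ {a}, a ∈ l₁ →
      ∃ b ∈ l₂, R a b := by
  intro l₁ l₂ h
  induction h with
  | nil => intro a ha; cases ha
  | cons hab h ih =>
    intro a ha
    rcases List.mem_cons.mp ha with rfl | ha
    · exact ⟨_, List.mem_cons_self, hab⟩
    · obtain ⟨b, hb, hRb⟩ := ih ha
      exact ⟨b, List.mem_cons_of_mem _ hb, hRb⟩

lemma forall₂_mem_right {α β : Type*} {R : α → β → Prop} :
    ∀ {l₁ : List α} {l₂ : List β}, List.Forall₂ R l₁ l₂ → ∀ {b}, b ∈ l₂ →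
      ∃ a ∈ l₁, R a b := by
  intro l₁ l₂ h
  induction h with
  | nil => intro b hb; cases hb
  | cons hab h ih =>
    intro b hb
    rcases List.mem_cons.mp hb with rfl | hb
    · exact ⟨_, List.mem_cons_self, hab⟩
    · obtain ⟨a, ha, hRa⟩ := ih hb
      exact ⟨a, List.mem_cons_of_mem _ ha, hRa⟩

/-- The key formula of a node: the hypothesis itself for a leaf, the
implication of the deduction step for a derived node. -/
def kform : Expl → PropForm
  | .node [] A => A
  | .node (c :: cs) B => bigImp ((c :: cs).map Expl.claim) B

/-- Agent `i` has a ground justification of `G` at `w`. -/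
def JAt (N : Frame) (i : Fin 2) (w : N.W) (G : PropForm) : Prop :=
  ∃ t : Tm, t.Ground ∧ G ∈ N.star i t w

/-- Agent 2 has ground justifications of the key formulas of all nodes. -/
def AllJ (N : Frame) (w : N.W) (E : Expl) : Prop :=
  ∀ sub ∈ E.subtrees, JAt N 1 w (kform sub)


lemma allJ_sub {N : Frame} {w : N.W} {E sub : Expl} (h : AllJ N w E)
    (hs : sub ∈ E.subtrees) : AllJ N w sub :=
  fun s hs' => h s (subtrees_trans E sub s hs hs')

lemma forall₂_imp_mem {α β : Type*} {R S : α → β → Prop} :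
    ∀ {l₁ : List α} {l₂ : List β}, List.Forall₂ R l₁ l₂ →
      (∀ a ∈ l₁, ∀ b, R a b → S a b) → List.Forall₂ S l₁ l₂ := by
  intro l₁ l₂ h
  induction h with
  | nil => intro _; exact List.Forall₂.nil
  | cons hab h ih =>
    intro himp
    exact List.Forall₂.cons (himp _ List.mem_cons_self _ hab)
      (ih fun a ha b hR => himp a (List.mem_cons_of_mem _ ha) b hR)

lemma dtermEx (N : Frame) (i : Fin 2) (w : N.W) : ∀ E : Expl, ∃ t, DTerm N i w E t := by
  refine expl_ind fun cs B ih => ?_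
  cases cs with
  | nil =>
    by_cases h : ∃ t : Tm, t.Ground ∧ B ∈ N.star i t w
    · obtain ⟨t, h1, h2⟩ := h; exact ⟨t, DTerm.hyp_just h1 h2⟩
    · exact ⟨_, DTerm.hyp_var h⟩
  | cons c cs' =>
    by_cases h : ∃ d : Tm, d.Ground ∧ bigImp ((c :: cs').map Expl.claim) B ∈ N.star i d w
    · obtain ⟨d, h1, h2⟩ := h
      obtain ⟨ts, hts, -⟩ := forall₂_of_forall_exists (R := DTerm N i w) (Q := fun _ => True)
        (fun a ha => by obtain ⟨t, ht⟩ := ih a ha; exact ⟨t, ht, trivial⟩)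
      exact ⟨_, DTerm.step (List.cons_ne_nil c cs') h1 h2 hts.length_eq.symm hts⟩
    · exact ⟨_, DTerm.step_var (List.cons_ne_nil c cs') h⟩

lemma dterm_ground_of_allJ {N : Frame} {w : N.W} :
    ∀ E : Expl, AllJ N w E → ∀ t, DTerm N 1 w E t → t.Ground := by
  refine expl_ind fun cs B ih hall t ht => ?_
  cases ht with
  | hyp_just h1 h2 => exact h1
  | hyp_var h => exact absurd (hall _ (self_mem_subtrees _)) h
  | step hne hd hj hlen hts =>
    refine ground_foldl.mpr ⟨hd, fun t' ht' => ?_⟩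
    obtain ⟨c, hc, hR⟩ := forall₂_mem_right hts ht'
    exact ih c hc (allJ_sub hall (mem_subtrees.mpr (Or.inr ⟨c, hc, self_mem_subtrees c⟩))) t' hR
  | step_var hne h =>
    cases cs with
    | nil => exact absurd rfl hne
    | cons c cs' => exact absurd (hall _ (self_mem_subtrees _)) h

lemma allJ_of_dterm_ground {N : Frame} {w : N.W} :
    ∀ E : Expl, ∀ t, DTerm N 1 w E t → t.Ground → AllJ N w E := by
  refine expl_ind fun cs B ih t ht hg => ?_
  cases ht with
  | hyp_just h1 h2 =>
    intro sub hsub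
    rcases mem_subtrees.mp hsub with rfl | ⟨c, hc, _⟩
    · exact ⟨_, h1, h2⟩
    · cases hc
  | hyp_var h => exact hg.elim
  | step hne hd hj hlen hts =>
    have hg' := ground_foldl.mp hg
    intro sub hsub
    rcases mem_subtrees.mp hsub with rfl | ⟨c, hc, hsub'⟩
    · cases cs with
      | nil => exact absurd rfl hne
      | cons c cs' => exact ⟨_, hg'.1, hj⟩
    · obtain ⟨tc, htc, hRc⟩ := forall₂_mem_left hts hc
      exact ih c hc tc hRc (hg'.2 tc htc) sub hsub'
  | step_var hne h => exact hg.elim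

lemma understands_iff {N : Frame} {w : N.W} {E : Expl} :
    Understands N w E ↔ AllJ N w E := by
  constructor
  · rintro ⟨t, ht, hg⟩; exact allJ_of_dterm_ground E t ht hg
  · intro h
    obtain ⟨t, ht⟩ := dtermEx N 1 w E
    exact ⟨t, ht, dterm_ground_of_allJ E h t ht⟩

lemma fval_iff {N : Frame} {w : N.W} : ∀ {E : Expl}, FVal N w E ↔ AllJ N w E := by
  intro E
  cases E with
  | node cs B =>
    cases cs with
    | nil =>
      constructor
      · rintro ⟨t, h1, h2⟩ sub hsub
        rcases mem_subtrees.mp hsub with rfl | ⟨c, hc, _⟩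
        · exact ⟨t, h1, h2⟩
        · cases hc
      · intro h; exact h _ (self_mem_subtrees _)
    | cons c cs' => exact understands_iff

lemma dterm_transfer {N N' : Frame} {i : Fin 2} {w : N.W} {w' : N'.W}
    (hstar : ∀ t, N.star i t w = N'.star i t w') :
    ∀ E t, DTerm N i w E t → DTerm N' i w' E t := by
  refine expl_ind fun cs B ih t ht => ?_
  cases ht with
  | hyp_just h1 h2 => exact DTerm.hyp_just h1 ((hstar _) ▸ h2)
  | hyp_var h =>
    exact DTerm.hyp_var fun ⟨t', h1, h2⟩ => h ⟨t', h1, (hstar t').symm ▸ h2⟩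
  | step hne hd hj hlen hts =>
    exact DTerm.step hne hd ((hstar _) ▸ hj) hlen
      (forall₂_imp_mem hts fun c hc t' hR => ih c hc t' hR)
  | step_var hne h =>
    exact DTerm.step_var hne fun ⟨d, h1, h2⟩ => h ⟨d, h1, (hstar d).symm ▸ h2⟩

lemma exists_whynode {N : Frame} {w : N.W} :
    ∀ E : Expl, ¬ AllJ N w E →
      ∃ s ∈ E.subtrees, ¬ AllJ N w s ∧ ∀ c ∈ s.children, AllJ N w c := by
  refine expl_ind fun cs B ih h => ?_
  by_cases hc : ∀ c ∈ cs, AllJ N w c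
  · exact ⟨.node cs B, self_mem_subtrees _, h, hc⟩
  · push_neg at hc
    obtain ⟨c, hcmem, hnc⟩ := hc
    obtain ⟨s, hs, h1, h2⟩ := ih c hcmem hnc
    exact ⟨s, mem_subtrees.mpr (Or.inr ⟨c, hcmem, hs⟩), h1, h2⟩

lemma why_kform_not {N : Frame} {w : N.W} {s : Expl}
    (h1 : ¬ AllJ N w s) (h2 : ∀ c ∈ s.children, AllJ N w c) :
    ¬ JAt N 1 w (kform s) := by
  intro hJ
  apply h1
  cases s with
  | node cs B =>
    intro s' hs'
    rcases mem_subtrees.mp hs' with rfl | ⟨c, hc, hs''⟩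
    · exact hJ
    · exact h2 c hc s' hs''


lemma kform_leaf {E : Expl} (h : E.children = []) : kform E = E.claim := by
  cases E with
  | node cs B =>
    have : cs = [] := h
    subst this
    rfl

lemma learnStar_zero (N : Frame) (w0 : N.W) (E : Expl) (Dts : List (PropForm × Tm))
    (r : Tm) (t : Tm) (u : N.W) : learnStar N w0 E Dts r 0 t u = N.star 0 t u := by
  unfold learnStar
  rw [if_neg]
  rintro ⟨h, -⟩
  exact absurd h (by decide)

lemma star_subset_learnStar (N : Frame) (w0 : N.W) (E : Expl) (Dts : List (PropForm × Tm))
    (r : Tm) (i : Fin 2) (t : Tm) (u : N.W) :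
    N.star i t u ⊆ learnStar N w0 E Dts r i t u := by
  unfold learnStar
  split
  · exact fun G hG => Or.inl (Or.inl hG)
  · exact fun G hG => hG

lemma learnStar_of_ne (N : Frame) (w0 : N.W) (E : Expl) (Dts : List (PropForm × Tm))
    (r : Tm) {u : N.W} (h : u ≠ w0) (i : Fin 2) (t : Tm) :
    learnStar N w0 E Dts r i t u = N.star i t u := by
  unfold learnStar
  rw [if_neg]
  rintro ⟨-, h'⟩
  exact h h'

lemma mem_learnStar_dts (N : Frame) (w0 : N.W) (E : Expl) {Dts : List (PropForm × Tm)}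
    (r : Tm) {G : PropForm} {t : Tm} (h : (G, t) ∈ Dts) :
    G ∈ learnStar N w0 E Dts r 1 t w0 := by
  unfold learnStar
  rw [if_pos ⟨rfl, rfl⟩]
  exact Or.inl (Or.inr h)

lemma mem_uset_self (N : Frame) (w : N.W) : ∀ sub : Expl, w ∈ Uset N w sub := by
  intro sub
  cases sub with
  | node cs B =>
    cases cs with
    | nil =>
      by_cases h : FVal N w (.node [] B)
      · rw [Uset, if_pos h]; exact h
      · rw [Uset, if_neg h]; exact h
    | cons c cs' =>
      by_cases h : FVal N w (.node (c :: cs') B)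
      · rw [Uset, if_pos h]
        exact (fval_iff.mp h) _ (self_mem_subtrees _)
      · rw [Uset, if_neg h]
        by_cases h2 : ∀ c' ∈ c :: cs', FVal N w c'
        · rw [if_pos h2]
          intro hex
          refine h (fval_iff.mpr fun s hs => ?_)
          rcases mem_subtrees.mp hs with rfl | ⟨c', hc', hs'⟩
          · exact hex
          · exact (fval_iff.mp (h2 c' hc')) s hs'
        · rw [if_neg h2]; trivial

lemma truthful (N : Frame) (w : N.W) (E : Expl) : w ∈ FeedbackSet N w E :=
  fun sub _ => mem_uset_self N w sub

lemma uset_neg {N : Frame} {w : N.W} {s : Expl}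
    (hF : ¬ FVal N w s) (hch : ∀ c ∈ s.children, FVal N w c) :
    Uset N w s = {u | ¬ ∃ t : Tm, t.Ground ∧ kform s ∈ N.star 1 t u} := by
  cases s with
  | node cs B =>
    cases cs with
    | nil => rw [Uset, if_neg hF]; rfl
    | cons c cs' =>
      rw [Uset, if_neg hF, if_pos (show ∀ c' ∈ c :: cs', FVal N w c' from hch)]
      rfl

lemma round (p : ConvState) (E : Expl) :
    ∃ q : ConvState, RoundStep p q E ∧
      (∀ t, q.1.star 0 t q.2 = p.1.star 0 t p.2) ∧
      (∀ G, JAt p.1 1 p.2 G → JAt q.1 1 q.2 G) ∧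
      (∀ G, (∀ u, p.1.R 0 p.2 u → ¬ JAt p.1 1 u G) → ¬ JAt q.1 1 q.2 G →
        ∀ u, q.1.R 0 q.2 u → ¬ JAt q.1 1 u G) ∧
      (AllJ p.1 p.2 E → JAt q.1 1 q.2 E.claim) ∧
      (AllJ q.1 q.2 E ∨ ∃ sub ∈ E.subtrees, ¬ JAt q.1 1 q.2 (kform sub) ∧
        ∀ u : q.1.W, ¬ JAt q.1 1 u (kform sub)) := by
  classical
  obtain ⟨N, w0⟩ := p
  set pick : Expl → Tm := fun E' => (dtermEx N 1 w0 E').choose with hpickdef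
  have hpickD : ∀ E', DTerm N 1 w0 E' (pick E') := fun E' => (dtermEx N 1 w0 E').choose_spec
  set Dts : List (PropForm × Tm) :=
    (E.subtrees.filter (fun s => !s.children.isEmpty)).map (fun s => (s.claim, pick s)) with hDts
  set r : Tm := pick E with hr
  have hgood : GoodDerived N w0 E Dts r := by
    refine ⟨hpickD E, ?_, ?_, ?_⟩
    · intro pr hpr
      simp only [hDts, List.mem_map, List.mem_filter] at hpr
      obtain ⟨s, ⟨hs1, hs2⟩, rfl⟩ := hpr
      exact ⟨s, hs1, by simpa using hs2, rfl, hpickD s⟩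
    · intro sub hsub hne
      refine ⟨pick sub, ?_, hpickD sub⟩
      simp only [hDts, List.mem_map, List.mem_filter]
      exact ⟨sub, ⟨hsub, by simpa using hne⟩, rfl⟩
    · intro hne
      simp only [hDts, List.mem_map, List.mem_filter]
      exact ⟨E, ⟨self_mem_subtrees E, by simpa using hne⟩, rfl⟩
  set Nmid : Frame := learnModel N w0 E Dts r with hNmid
  have hmidstep : ExplStep ⟨N, w0⟩ ⟨Nmid, w0⟩ E := ⟨Dts, r, hgood, rfl⟩
  have hw : w0 ∈ FeedbackSet Nmid w0 E := truthful Nmid w0 E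
  set q : ConvState :=
    ⟨Nmid.restrict (FeedbackSet Nmid w0 E) ⟨w0, hw⟩, ⟨w0, hw⟩⟩ with hq
  have hfb : FbStep ⟨Nmid, w0⟩ q E := ⟨hw, rfl⟩
  have hsub1 : ∀ (i : Fin 2) (t : Tm) (G : PropForm),
      G ∈ N.star i t w0 → G ∈ Nmid.star i t w0 :=
    fun i t G hG => star_subset_learnStar N w0 E Dts r i t w0 hG
  refine ⟨q, ⟨⟨Nmid, w0⟩, hmidstep, hfb⟩, ?_, ?_, ?_, ?_, ?_⟩
  · intro t
    exact learnStar_zero N w0 E Dts r t w0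
  · rintro G ⟨t, h1, h2⟩
    exact ⟨t, h1, hsub1 1 t G h2⟩
  · intro G hNo hGq u hRu
    rintro ⟨t, ht, hmem⟩
    by_cases hu : u.1 = w0
    · refine hGq ⟨t, ht, ?_⟩
      have hmem' : G ∈ Nmid.star 1 t u.1 := hmem
      rw [hu] at hmem'
      exact hmem'
    · have hmem' : G ∈ learnStar N w0 E Dts r 1 t u.1 := hmem
      rw [learnStar_of_ne N w0 E Dts r hu] at hmem'
      exact hNo u.1 hRu ⟨t, ht, hmem'⟩
  · intro hAll
    by_cases hne : E.children = []
    · obtain ⟨t, h1, h2⟩ := hAll E (self_mem_subtrees E)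
      rw [kform_leaf hne] at h2
      exact ⟨t, h1, hsub1 1 t E.claim h2⟩
    · have hgr : r.Ground := dterm_ground_of_allJ E hAll r (hpickD E)
      exact ⟨r, hgr, mem_learnStar_dts N w0 E r (hgood.2.2.2 hne)⟩
  · by_cases hA : AllJ Nmid w0 E
    · exact Or.inl hA
    · obtain ⟨s, hs, h1, h2⟩ := exists_whynode E hA
      have hFs : ¬ FVal Nmid w0 s := fun h => h1 (fval_iff.mp h)
      have hchF : ∀ c ∈ s.children, FVal Nmid w0 c := fun c hc => fval_iff.mpr (h2 c hc)
      have huset := uset_neg hFs hchF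
      have hknot : ¬ JAt Nmid 1 w0 (kform s) := why_kform_not h1 h2
      refine Or.inr ⟨s, hs, hknot, ?_⟩
      intro u
      have hu : u.1 ∈ Uset Nmid w0 s := u.2 s hs
      rw [huset] at hu
      rintro ⟨t, ht, hmem⟩
      exact hu ⟨t, ht, hmem⟩


lemma subtree_of_step : ∀ (E : Expl) (pr : List PropForm × PropForm), pr ∈ E.steps →
    ∃ cs, cs ≠ [] ∧ Expl.node cs pr.2 ∈ E.subtrees ∧ cs.map Expl.claim = pr.1 := by
  refine expl_ind fun ds C ih pr h => ?_
  cases ds with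
  | nil => rw [Expl.steps] at h; cases h
  | cons d ds' =>
    rcases mem_steps_cons.mp h with rfl | ⟨c, hc, h'⟩
    · exact ⟨d :: ds', List.cons_ne_nil _ _, self_mem_subtrees _, rfl⟩
    · obtain ⟨cs, h1, h2, h3⟩ := ih c hc pr h'
      exact ⟨cs, h1, mem_subtrees.mpr (Or.inr ⟨c, hc, h2⟩), h3⟩

lemma exists_mostPref (N : Frame) (w : N.W) (X : Set Expl) (hne : X.Nonempty) :
    ∃ E, MostPref N w X E := by
  classical
  obtain ⟨E1, hE1X, hE1⟩ := Nat.sInf_mem (hne.image (fun E => (Nset N w E).ncard))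
  set n1 := sInf ((fun E => (Nset N w E).ncard) '' X) with hn1
  have hYne : ({E | E ∈ X ∧ (Nset N w E).ncard = n1} : Set Expl).Nonempty := ⟨E1, hE1X, hE1⟩
  obtain ⟨E2, ⟨hE2X, hE2n⟩, hE2⟩ := Nat.sInf_mem (hYne.image (fun E => E.dset.ncard))
  refine ⟨E2, hE2X, fun E' hE' => ?_⟩
  have hge : n1 ≤ (Nset N w E').ncard := Nat.sInf_le ⟨E', hE', rfl⟩
  rcases lt_or_eq_of_le hge with hlt | heq
  · exact Or.inl (by rw [hE2n]; exact hlt)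
  · refine Or.inr ⟨by rw [hE2n]; exact heq.symm, ?_⟩
    have h3 : sInf ((fun E => E.dset.ncard) '' {E | E ∈ X ∧ (Nset N w E).ncard = n1})
        ≤ E'.dset.ncard := Nat.sInf_le ⟨E', ⟨hE', heq.symm⟩, rfl⟩
    have h4 : E2.dset.ncard = sInf ((fun E => E.dset.ncard) '' {E | E ∈ X ∧ (Nset N w E).ncard = n1}) := hE2
    omega

/-- Formulas that agent 1 can justify by a ground term at the start. -/
def S0 (M : Frame) (w : M.W) : Set PropForm := {G | ∃ t : Tm, t.Ground ∧ G ∈ M.star 0 t w}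

lemma s0_finite {M : Frame} {w : M.W} (hM : M.Modular) : (S0 M w).Finite := by
  apply Set.Finite.subset
    (Set.Finite.biUnion (hM.2.1 0 w) (fun t ht => hM.2.2 0 t w ht.1))
  rintro G ⟨t, h1, h2⟩
  exact Set.mem_biUnion (⟨h1, G, h2⟩ : t.Ground ∧ (M.star 0 t w).Nonempty) h2

/-- Invariant of reachable states. -/
def Good (M : Frame) (w : M.W) (E0 : Expl) (p : ConvState) (D : Set PropForm) : Prop :=
  (∀ t, p.1.star 0 t p.2 = M.star 0 t w) ∧
  AllJ p.1 p.2 E0 ∧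
  (∀ G ∈ D, JAt p.1 1 p.2 G ∨ ∀ u, p.1.R 0 p.2 u → ¬ JAt p.1 1 u G) ∧
  D ⊆ S0 M w

/-- Termination measure. -/
noncomputable def psi (M : Frame) (w : M.W) (p : ConvState) (D : Set PropForm) : ℕ :=
  (S0 M w \ (D ∪ {G | JAt p.1 1 p.2 G})).ncard + (S0 M w \ {G | JAt p.1 1 p.2 G}).ncard

lemma ncard_diff_le {M : Frame} {w : M.W} (hfin : (S0 M w).Finite)
    {A B : Set PropForm} (h : A ⊆ B) :
    (S0 M w \ B).ncard ≤ (S0 M w \ A).ncard :=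
  Set.ncard_le_ncard (fun G hG => ⟨hG.1, fun hA => hG.2 (h hA)⟩)
    (hfin.subset Set.diff_subset)

lemma ncard_diff_lt {M : Frame} {w : M.W} (hfin : (S0 M w).Finite)
    {A B : Set PropForm} (h : A ⊆ B) {G : PropForm}
    (hG : G ∈ S0 M w) (hGB : G ∈ B) (hGA : G ∉ A) :
    (S0 M w \ B).ncard < (S0 M w \ A).ncard :=
  Set.ncard_lt_ncard
    ⟨fun G' hG' => ⟨hG'.1, fun hA => hG'.2 (h hA)⟩,
      fun hcon => (hcon ⟨hG, hGA⟩).2 hGB⟩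
    (hfin.subset Set.diff_subset)

lemma E0_lam {M : Frame} {w : M.W} {F : PropForm} {E0 : Expl}
    (hc : E0.claim = F) (haw : Available M w E0)
    {p : ConvState} {D : Set PropForm} (hG : Good M w E0 p D) :
    E0 ∈ lam p.1 p.2 [] F := by
  refine ⟨hc, fun h => absurd rfl h, ?_, ?_, ?_, ?_⟩
  · intro A hA
    obtain ⟨t, h1, h2⟩ := haw.1 A hA
    exact ⟨t, h1, (hG.1 t).symm ▸ h2⟩
  · intro sub hsub hne
    obtain ⟨s, h1, h2, h3⟩ := haw.2.1 sub hsub hne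
    exact ⟨s, h1, dterm_transfer (fun t => (hG.1 t).symm) sub s h2, (hG.1 s).symm ▸ h3⟩
  · intro A hA hall
    exact hall p.2 (p.1.refl 0 p.2) (hG.2.1 _ (hyps_leaf_subtree E0 A hA))
  · intro pr hpr hall
    obtain ⟨cs, hne, hsub, hmap⟩ := subtree_of_step E0 pr hpr
    have hJ := hG.2.1 _ hsub
    cases cs with
    | nil => exact absurd rfl hne
    | cons c cs' =>
      refine hall p.2 (p.1.refl 0 p.2) ?_
      obtain ⟨t, ht1, ht2⟩ := hJ
      rw [show bigImp pr.1 pr.2 = kform (Expl.node (c :: cs') pr.2) by rw [← hmap]; rfl]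
      exact ⟨t, ht1, ht2⟩

lemma kform_mem_S0 {M : Frame} {w : M.W} {p : ConvState}
    (hstar0 : ∀ t, p.1.star 0 t p.2 = M.star 0 t w)
    {E : Expl} (hAv : Available p.1 p.2 E) :
    ∀ sub ∈ E.subtrees, kform sub ∈ S0 M w := by
  intro sub hsub
  cases sub with
  | node cs B =>
    cases cs with
    | nil =>
      obtain ⟨t, h1, h2⟩ := hAv.1 B (leaf_subtree_hyps E B hsub)
      exact ⟨t, h1, (hstar0 t) ▸ h2⟩
    | cons c cs' =>
      obtain ⟨s, h1, h2, h3⟩ := hAv.2.1 _ hsub (by simp [Expl.children])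
      cases h2 with
      | step hne hd hj hlen hts => exact ⟨_, hd, (hstar0 _) ▸ hj⟩
      | step_var hne hx => exact h1.elim

lemma cands_claim {N : Frame} {v : N.W} {F : PropForm} {prev : Expl}
    (hprev : AllJ N v prev) : ∀ E ∈ Cands N v F prev, E.claim = F := by
  rintro E (h | ⟨sub, hsub, h⟩)
  · exact h.1
  · exact absurd (fval_iff.mpr (allJ_sub hprev hsub.1)) hsub.2.1

lemma cands_avail {N : Frame} {v : N.W} {F : PropForm} {prev : Expl} :
    ∀ E ∈ Cands N v F prev, Available N v E := by
  rintro E (h | ⟨sub, hsub, h⟩)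
  · exact h.2.2
  · exact h.2.2


/-- The conclusion of the termination theorem, relative to a starting state
`p` and a candidate set `X` for the first explanation. -/
def Concl (F : PropForm) (p : ConvState) (X : Set Expl) : Prop :=
  ∃ (n : ℕ) (Es : ℕ → Expl) (st : ℕ → ConvState),
    1 ≤ n ∧ st 0 = p ∧
    (∀ k < n, RoundStep (st k) (st (k + 1)) (Es k)) ∧
    MostPref p.1 p.2 X (Es 0) ∧
    (∀ k, 1 ≤ k → k < n →
      MostPref (st k).1 (st k).2 (Cands (st k).1 (st k).2 F (Es (k - 1))) (Es k)) ∧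
    (∃ t : Tm, t.Ground ∧ F ∈ (st n).1.star 1 t (st n).2) ∧
    (∀ sub ∈ (Es (n - 1)).subtrees, FVal (st n).1 (st n).2 sub)

lemma splice {F : PropForm} {p q : ConvState} {X : Set Expl} {Ech : Expl}
    (hR : RoundStep p q Ech) (hmp : MostPref p.1 p.2 X Ech)
    (hrec : Concl F q (Cands q.1 q.2 F Ech)) : Concl F p X := by
  obtain ⟨n', Es', st', hn', h0', hrounds', hmp0', hmpk', hsucc, hFv⟩ := hrec
  obtain ⟨m, rfl⟩ : ∃ m, n' = m + 1 := ⟨n' - 1, (Nat.succ_pred_eq_of_pos hn').symm⟩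
  refine ⟨m + 2, fun j => match j with | 0 => Ech | Nat.succ i => Es' i,
    fun j => match j with | 0 => p | Nat.succ i => st' i, by omega, rfl, ?_, hmp, ?_, ?_, ?_⟩
  · intro k hk
    match k with
    | 0 =>
      show RoundStep p (st' 0) Ech
      rw [h0']; exact hR
    | Nat.succ i => exact hrounds' i (by omega)
  · intro k hk1 hk2
    match k with
    | 0 => omega
    | 1 =>
      show MostPref (st' 0).1 (st' 0).2 (Cands (st' 0).1 (st' 0).2 F Ech) (Es' 0)
      rw [h0']; exact hmp0'
    | Nat.succ (Nat.succ i) => exact hmpk' (i + 1) (by omega) (by omega)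
  · exact hsucc
  · exact hFv

lemma cont {M : Frame} {w : M.W} {F : PropForm} {E0 : Expl}
    (hM : M.Modular) (hc : E0.claim = F) (haw : Available M w E0) :
    ∀ (μ : ℕ) (p : ConvState) (D : Set PropForm) (b : Bool) (X : Set Expl),
      Good M w E0 p D → 2 * psi M w p D + b.toNat ≤ μ →
      E0 ∈ X → (∀ E ∈ X, Available p.1 p.2 E) →
      (b = false → ∀ E ∈ X, E.claim = F) →
      Concl F p X := by
  have hfin : (S0 M w).Finite := s0_finite hM
  intro μ
  induction μ using Nat.strong_induction_on with
  | _ μ ih =>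
    intro p D b X hGood hμ hE0X hXav hXcl
    have hbt : Bool.toNat true = 1 := rfl
    have hbf : Bool.toNat false = 0 := rfl
    have hb1 : b.toNat ≤ 1 := by cases b <;> simp
    obtain ⟨Emin, hmp⟩ := exists_mostPref p.1 p.2 X ⟨E0, hE0X⟩
    have hAv : Available p.1 p.2 Emin := hXav Emin hmp.1
    have hkS0 : ∀ sub ∈ Emin.subtrees, kform sub ∈ S0 M w := kform_mem_S0 hGood.1 hAv
    obtain ⟨q, hRq, h2, h3, h4, h5, h6⟩ := round p Emin
    have hGoodq : ∀ D', D ⊆ D' →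
        (∀ G ∈ D', G ∈ D ∨ (¬ JAt q.1 1 q.2 G ∧ ∀ u : q.1.W, ¬ JAt q.1 1 u G)) →
        D' ⊆ S0 M w → Good M w E0 q D' := by
      intro D' hDD' hnew hDS0
      refine ⟨fun t => (h2 t).trans (hGood.1 t), fun s hs => h3 _ (hGood.2.1 s hs),
        ?_, hDS0⟩
      intro G hGD'
      rcases hnew G hGD' with hGD | ⟨hq1, hq2⟩
      · rcases hGood.2.2.1 G hGD with hJ | hNo
        · exact Or.inl (h3 _ hJ)
        · by_cases hq : JAt q.1 1 q.2 G
          · exact Or.inl hq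
          · exact Or.inr (h4 G hNo hq)
      · exact Or.inr (fun u _ => hq2 u)
    by_cases hA : AllJ p.1 p.2 Emin
    · -- the chosen explanation is fully understood by agent 2 before learning
      have hAq : AllJ q.1 q.2 Emin := fun s hs => h3 _ (hA s hs)
      by_cases hclaim : Emin.claim = F
      · -- success in one round
        refine ⟨1, fun _ => Emin, fun j => match j with | 0 => p | Nat.succ _ => q,
          le_rfl, rfl, ?_, hmp, by omega, ?_, ?_⟩
        · intro k hk
          match k with
          | 0 => exact hRq
        · exact hclaim ▸ h5 hA
        · intro sub hsub
          exact fval_iff.mpr (allJ_sub hAq hsub)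
      · -- wrong claim: one more round, then only claim-F candidates remain
        have hb : b = true := by
          cases b
          · exact absurd (hXcl rfl Emin hmp.1) hclaim
          · rfl
        subst hb
        have hpsile : psi M w q D ≤ psi M w p D := by
          have t1 := ncard_diff_le (w := w) hfin
            (A := D ∪ {G | JAt p.1 1 p.2 G}) (B := D ∪ {G | JAt q.1 1 q.2 G})
            (Set.union_subset_union_right D (fun G hG => h3 G hG))
          have t2 := ncard_diff_le (w := w) hfin
            (A := {G | JAt p.1 1 p.2 G}) (B := {G | JAt q.1 1 q.2 G})
            (fun G hG => h3 G hG)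
          unfold psi
          omega
        refine splice hRq hmp (ih (2 * psi M w q D) (by omega) q D false
          (Cands q.1 q.2 F Emin) (hGoodq D (fun _ h => h) (fun G hG => Or.inl hG)
            hGood.2.2.2) (by simp) ?_ (cands_avail) ?_)
        · exact Or.inl (E0_lam hc haw (hGoodq D (fun _ h => h) (fun G hG => Or.inl hG)
            hGood.2.2.2))
        · exact fun _ => cands_claim hAq
    · -- not yet understood: the measure decreases
      obtain ⟨s0, hs0, hknot⟩ : ∃ s ∈ Emin.subtrees, ¬ JAt p.1 1 p.2 (kform s) := by
        by_contra hcon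
        push_neg at hcon
        exact hA hcon
      rcases h6 with hL | ⟨sF, hsF, hnotJ, hNo⟩
      · -- fully understood after learning: J grows
        have hpsilt : psi M w q D < psi M w p D := by
          have t1 := ncard_diff_le (w := w) hfin
            (A := D ∪ {G | JAt p.1 1 p.2 G}) (B := D ∪ {G | JAt q.1 1 q.2 G})
            (Set.union_subset_union_right D (fun G hG => h3 G hG))
          have t2 := ncard_diff_lt (w := w) hfin
            (A := {G | JAt p.1 1 p.2 G}) (B := {G | JAt q.1 1 q.2 G})
            (fun G hG => h3 G hG) (hkS0 s0 hs0) (hL s0 hs0) hknot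
          unfold psi
          omega
        refine splice hRq hmp (ih (2 * psi M w q D + 1) (by omega) q D true
          (Cands q.1 q.2 F Emin) (hGoodq D (fun _ h => h) (fun G hG => Or.inl hG)
            hGood.2.2.2) (by omega) ?_ (cands_avail) (fun h => nomatch h))
        exact Or.inl (E0_lam hc haw (hGoodq D (fun _ h => h) (fun G hG => Or.inl hG)
          hGood.2.2.2))
      · -- a node with negative feedback: D grows
        have hnotJp : ¬ JAt p.1 1 p.2 (kform sF) := fun h => hnotJ (h3 _ h)
        have hnotD : kform sF ∉ D := by
          intro hD
          rcases hGood.2.2.1 _ hD with hJ | hNo'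
          · exact hnotJp hJ
          · cases sF with
          | node cs B =>
            cases cs with
            | nil =>
              exact hAv.2.2.1 B (leaf_subtree_hyps _ B hsF)
                (fun u hu hex => hNo' u hu hex)
            | cons c cs' =>
              exact hAv.2.2.2 ((c :: cs').map Expl.claim, B)
                (step_of_subtree _ _ _ (List.cons_ne_nil _ _) hsF)
                (fun u hu hex => hNo' u hu hex)
        have hGoodq' : Good M w E0 q (insert (kform sF) D) :=
          hGoodq (insert (kform sF) D) (Set.subset_insert _ _)
            (fun G hG => by
              rcases Set.mem_insert_iff.mp hG with rfl | hG
              · exact Or.inr ⟨hnotJ, hNo⟩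
              · exact Or.inl hG)
            (Set.insert_subset (hkS0 sF hsF) hGood.2.2.2)
        have hpsilt : psi M w q (insert (kform sF) D) < psi M w p D := by
          have t1 := ncard_diff_lt (w := w) hfin
            (A := D ∪ {G | JAt p.1 1 p.2 G})
            (B := insert (kform sF) D ∪ {G | JAt q.1 1 q.2 G})
            (Set.union_subset_union (Set.subset_insert _ _) (fun G hG => h3 G hG))
            (hkS0 sF hsF) (Or.inl (Set.mem_insert _ _))
            (fun hcon => hcon.elim hnotD hnotJp)
          have t2 := ncard_diff_le (w := w) hfin
            (A := {G | JAt p.1 1 p.2 G}) (B := {G | JAt q.1 1 q.2 G})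
            (fun G hG => h3 G hG)
          unfold psi
          omega
        refine splice hRq hmp (ih (2 * psi M w q (insert (kform sF) D) + 1) (by omega)
          q (insert (kform sF) D) true (Cands q.1 q.2 F Emin) hGoodq' (by omega) ?_
          (cands_avail) (fun h => nomatch h))
        exact Or.inl (E0_lam hc haw hGoodq')

end ConvAux





/-- Termination of the conversation.  If there is an
explanation `E₀` for the claim `F` that agent 2 understands and agent 1 is
aware of (i.e., is available), and the set of available explanations for `F`
is finite, then there is a finite conversation — alternating most-preferred
explanations chosen by agent 1 and truthful feedback from agent 2 — after
which agent 2 justifies `F` by a ground term and all nodes of the final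
feedback have value 1. -/
theorem conversation_terminates (M : Frame) (hM : M.Modular) (w : M.W)
    (F : PropForm) (E0 : Expl) (hc : E0.claim = F)
    (hund : Understands M w E0) (haw : Available M w E0)
    (hfin : {E : Expl | E.claim = F ∧ Available M w E}.Finite) :
    ∃ (n : ℕ) (Es : ℕ → Expl) (st : ℕ → ConvState),
      1 ≤ n ∧
      st 0 = ⟨M, w⟩ ∧
      (∀ k < n, RoundStep (st k) (st (k + 1)) (Es k)) ∧
      MostPref (st 0).1 (st 0).2 (lam (st 0).1 (st 0).2 [] F) (Es 0) ∧
      (∀ k, 1 ≤ k → k < n →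
        MostPref (st k).1 (st k).2
          (Cands (st k).1 (st k).2 F (Es (k - 1))) (Es k)) ∧
      (∃ t : Tm, t.Ground ∧ F ∈ (st n).1.star 1 t (st n).2) ∧
      (∀ sub ∈ (Es (n - 1)).subtrees, FVal (st n).1 (st n).2 sub) := by
  classical
  have hAll0 : ConvAux.AllJ M w E0 := ConvAux.understands_iff.mp hund
  have hGood : ConvAux.Good M w E0 ⟨M, w⟩ ∅ :=
    ⟨fun _ => rfl, hAll0, fun _ hG => hG.elim, Set.empty_subset _⟩
  have hE0lam : E0 ∈ lam M w [] F := ConvAux.E0_lam hc haw hGood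
  have hconcl : ConvAux.Concl F ⟨M, w⟩ (lam M w [] F) :=
    ConvAux.cont hM hc haw (2 * ConvAux.psi M w ⟨M, w⟩ ∅) ⟨M, w⟩ ∅ false (lam M w [] F)
      hGood (by simp) hE0lam (fun _ hE => hE.2.2) (fun _ E hE => hE.1)
  obtain ⟨n, Es, st, hn, h0, hrounds, hmp0, hmpk, hsucc, hFv⟩ := hconcl
  exact ⟨n, Es, st, hn, h0, hrounds, by rw [h0]; exact hmp0, hmpk, hsucc, hFv⟩
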